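/- Let G be a finite 2-connected simple graph on n vertices (G has at least 3 vertices and the deletion of any single vertex leaves a connected graph) whose girth g is finite and satisfies g ≥ 4. Then meg(G) ≤ 4n/(g - 3). -/

import Mathlib

open SimpleGraph

/-- A pair of vertices `u`, `v` monitors an edge `e` if `u` and `v` are reachable from
each other and `e` belongs to every shortest path (walk of length `G.dist u v`)
between `u` and `v`. -/
def Monitors {V : Type*} (G : SimpleGraph V) (u v : V) (e : Sym2 V) : Prop :=
  G.Reachable u v ∧ ∀ p : G.Walk u v, p.length = G.dist u v → e ∈ p.edges

/-- A monitoring edge-geodetic set of `G`: every edge of `G` is monitored by some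
pair of vertices of `M`. -/
def IsMEGSet {V : Type*} (G : SimpleGraph V) (M : Set V) : Prop :=
  ∀ e ∈ G.edgeSet, ∃ u ∈ M, ∃ v ∈ M, Monitors G u v e

/-- The monitoring edge-geodetic number of `G`: the minimum size of an MEG-set. -/
noncomputable def meg {V : Type*} [Fintype V] (G : SimpleGraph V) : ℕ :=
  sInf {n : ℕ | ∃ M : Finset V, IsMEGSet G ↑M ∧ M.card = n}

set_option linter.unusedSectionVars false

namespace MegAux

variable {V : Type*} [DecidableEq V] {G : SimpleGraph V}

/-- Any cycle has length at least the girth. -/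
lemma girth_le_of_cycle {a : V} {C : G.Walk a a} (hC : C.IsCycle) : G.girth ≤ C.length := by
  have h1 : G.egirth ≤ (C.length : ℕ∞) := by
    calc G.egirth ≤ ⨅ w : G.Walk a a, ⨅ _ : w.IsCycle, (w.length : ℕ∞) := iInf_le _ a
      _ ≤ ⨅ _ : C.IsCycle, (C.length : ℕ∞) := iInf_le _ C
      _ ≤ (C.length : ℕ∞) := iInf_le _ hC
  have h2 := ENat.toNat_le_toNat h1 (by simp)
  simpa [SimpleGraph.girth] using h2

/-- Two paths between the same endpoints whose total length is less than the girth
are equal. -/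
lemma paths_eq {a b : V} (p q : G.Walk a b) (hp : p.IsPath) (hq : q.IsPath)
    (hlen : p.length + q.length < G.girth) : p = q := by
  classical
  set E : Set (Sym2 V) := {e | e ∈ p.edges ∨ e ∈ q.edges} with hE
  set H : SimpleGraph V := SimpleGraph.fromEdgeSet E with hH
  have hHG : H ≤ G := by
    intro x y hxy
    rw [hH, SimpleGraph.fromEdgeSet_adj] at hxy
    rcases hxy.1 with h1 | h1
    · exact (G.mem_edgeSet).mp (p.edges_subset_edgeSet h1)
    · exact (G.mem_edgeSet).mp (q.edges_subset_edgeSet h1)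
  have hpE : ∀ e ∈ p.edges, e ∈ H.edgeSet := by
    intro e he
    rw [hH, SimpleGraph.edgeSet_fromEdgeSet]
    exact ⟨Or.inl he, G.not_isDiag_of_mem_edgeSet (p.edges_subset_edgeSet he)⟩
  have hqE : ∀ e ∈ q.edges, e ∈ H.edgeSet := by
    intro e he
    rw [hH, SimpleGraph.edgeSet_fromEdgeSet]
    exact ⟨Or.inr he, G.not_isDiag_of_mem_edgeSet (q.edges_subset_edgeSet he)⟩
  by_cases hac : H.IsAcyclic
  · have hpath := isAcyclic_iff_path_unique.mp hac
      ⟨p.transfer H hpE, hp.transfer hpE⟩ ⟨q.transfer H hqE, hq.transfer hqE⟩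
    have h2 : p.transfer H hpE = q.transfer H hqE := congrArg Subtype.val hpath
    have hq2 : ∀ e ∈ (p.transfer H hpE).edges, e ∈ G.edgeSet := by
      rw [Walk.edges_transfer]; exact fun e he => p.edges_subset_edgeSet he
    have hq3 : ∀ e ∈ (q.transfer H hqE).edges, e ∈ G.edgeSet := by
      rw [Walk.edges_transfer]; exact fun e he => q.edges_subset_edgeSet he
    have e1 : ((p.transfer H hpE).transfer G hq2) = ((q.transfer H hqE).transfer G hq3) := by
      rw [Walk.transfer_eq_map_ofLE _ hq2 hHG, Walk.transfer_eq_map_ofLE _ hq3 hHG, h2]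
    rwa [Walk.transfer_transfer, Walk.transfer_transfer, Walk.transfer_self,
      Walk.transfer_self] at e1
  · exfalso
    simp only [SimpleGraph.IsAcyclic, not_forall, not_not] at hac
    obtain ⟨x, C, hC⟩ := hac
    have hCE : ∀ e ∈ C.edges, e ∈ G.edgeSet := by
      intro e he
      exact SimpleGraph.edgeSet_mono hHG (C.edges_subset_edgeSet he)
    have hC' : (C.transfer G hCE).IsCycle := hC.transfer hCE
    have hg := girth_le_of_cycle hC'
    rw [Walk.length_transfer] at hg
    -- bound the length of C by the number of available edges
    have hnodup : C.edges.Nodup := hC.edges_nodup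
    have hsub : C.edges.toFinset ⊆ p.edges.toFinset ∪ q.edges.toFinset := by
      intro e he
      rw [List.mem_toFinset] at he
      have : e ∈ H.edgeSet := C.edges_subset_edgeSet he
      rw [hH, SimpleGraph.edgeSet_fromEdgeSet] at this
      rcases this.1 with h1 | h1
      · exact Finset.mem_union_left _ (List.mem_toFinset.mpr h1)
      · exact Finset.mem_union_right _ (List.mem_toFinset.mpr h1)
    have hlen1 : C.length = C.edges.toFinset.card := by
      rw [List.toFinset_card_of_nodup hnodup, Walk.length_edges]
    have hlen2 : C.edges.toFinset.card ≤ p.edges.toFinset.card + q.edges.toFinset.card :=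
      le_trans (Finset.card_le_card hsub) (Finset.card_union_le _ _)
    have hlen3 : p.edges.toFinset.card ≤ p.length := by
      rw [← Walk.length_edges]; exact List.toFinset_card_le _
    have hlen4 : q.edges.toFinset.card ≤ q.length := by
      rw [← Walk.length_edges]; exact List.toFinset_card_le _
    omega

/-- Along any walk, the two distances to the endpoints sum to at most the length. -/
lemma dist_add_dist_le_of_mem_support {a b y : V} (p : G.Walk a b) (hy : y ∈ p.support) :
    G.dist a y + G.dist y b ≤ p.length := by
  have hspec := p.take_spec hy
  have hlen := congrArg Walk.length hspec
  rw [Walk.length_append] at hlen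
  have h1 := SimpleGraph.dist_le (p.takeUntil y hy)
  have h2 := SimpleGraph.dist_le (p.dropUntil y hy)
  omega

/-- A geodesic: a path whose length is the distance. -/
lemma exists_geodesic (hconn : G.Connected) (a b : V) :
    ∃ p : G.Walk a b, p.IsPath ∧ p.length = G.dist a b := by
  obtain ⟨p, hp⟩ := hconn.exists_walk_length_eq_dist a b
  refine ⟨p.bypass, p.bypass_isPath, le_antisymm ?_ ?_⟩
  · exact hp ▸ p.length_bypass_le
  · exact SimpleGraph.dist_le _

/-- Appending one edge to a path avoiding the new vertex yields a path. -/
lemma isPath_concat {a b c : V} {p : G.Walk a b} (hp : p.IsPath) (h : G.Adj b c)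
    (hc : c ∉ p.support) : (p.concat h).IsPath := by
  have : (p.concat h).reverse.IsPath := by
    rw [Walk.reverse_concat]
    rw [Walk.cons_isPath_iff]
    exact ⟨hp.reverse, by simpa using hc⟩
  simpa only [Walk.reverse_reverse] using this.reverse

/-- In a 2-connected graph on at least 3 vertices, every vertex has two distinct
neighbors. -/
lemma two_neighbors [Fintype V] (hn : 3 ≤ Fintype.card V) (hconn : G.Connected)
    (h2conn : ∀ v : V, (G.induce ({v}ᶜ : Set V)).Connected) (z : V) :
    ∃ w₁ w₂ : V, G.Adj z w₁ ∧ G.Adj z w₂ ∧ w₁ ≠ w₂ := by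
  obtain ⟨y, hy⟩ : ∃ y : V, y ≠ z := Fintype.exists_ne_of_one_lt_card (by omega) z
  obtain ⟨p⟩ := hconn.preconnected z y
  obtain ⟨w₁, hw₁⟩ : ∃ w₁, G.Adj z w₁ := by
    cases p with
    | nil => exact absurd rfl hy
    | cons h q => exact ⟨_, h⟩
  by_contra hcon
  push_neg at hcon
  have huniq : ∀ w, G.Adj z w → w = w₁ := fun w hw => hcon w w₁ hw hw₁
  obtain ⟨t, htz, htw⟩ : ∃ t : V, t ≠ z ∧ t ≠ w₁ := by
    by_contra hno
    push_neg at hno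
    have hsub : (Finset.univ : Finset V) ⊆ {z, w₁} := by
      intro t _
      by_cases h : t = z
      · simp [h]
      · simp [hno t h]
    have := Finset.card_le_card hsub
    have h2 : ({z, w₁} : Finset V).card ≤ 2 := Finset.card_insert_le _ _ |>.trans (by simp)
    simp [Finset.card_univ] at this
    omega
  have hzw1 : z ≠ w₁ := G.ne_of_adj hw₁
  have hz : z ∈ ({w₁}ᶜ : Set V) := hzw1
  have ht : t ∈ ({w₁}ᶜ : Set V) := htw
  obtain ⟨q⟩ := (h2conn w₁).preconnected ⟨z, hz⟩ ⟨t, ht⟩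
  have hne' : (⟨z, hz⟩ : ({w₁}ᶜ : Set V)) ≠ ⟨t, ht⟩ := by
    intro h
    exact htz (congrArg Subtype.val h).symm
  cases q with
  | nil => exact hne' rfl
  | @cons _ b _ hadj q' =>
      have hb : G.Adj z (↑b) := hadj
      have heq := huniq _ hb
      have hbne : (↑b : V) ≠ w₁ := Set.mem_compl_singleton_iff.mp b.property
      exact hbne heq

/-- If `u ~ v` then their distances to any vertex `x` differ by exactly one,
provided the distances are well below half the girth. -/
lemma dist_succ_of_adj (hconn : G.Connected) {u v x : V} (huv : G.Adj u v)
    (hbud : 2 * G.dist x u + 2 < G.girth) :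
    G.dist x v = G.dist x u + 1 ∨ G.dist x u = G.dist x v + 1 := by
  have h1 : G.dist u v = 1 := dist_eq_one_iff_adj.mpr huv
  have h1' : G.dist v u = 1 := dist_eq_one_iff_adj.mpr huv.symm
  have t1 : G.dist x v ≤ G.dist x u + G.dist u v := hconn.dist_triangle
  have t2 : G.dist x u ≤ G.dist x v + G.dist v u := hconn.dist_triangle
  suffices hne : G.dist x v ≠ G.dist x u by omega
  intro heq
  obtain ⟨p, hp, hpl⟩ := exists_geodesic hconn x u
  have hvp : v ∉ p.support := by
    intro hv
    have := dist_add_dist_le_of_mem_support p hv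
    omega
  have hP : (p.concat huv).IsPath := isPath_concat hp huv hvp
  obtain ⟨q, hq, hql⟩ := exists_geodesic hconn x v
  have heq2 := paths_eq (p.concat huv) q hP hq (by rw [Walk.length_concat]; omega)
  have hlen := congrArg Walk.length heq2
  rw [Walk.length_concat] at hlen
  omega

/-- Extension lemma: a vertex of degree ≥ 2 at distance well below half the girth from `r`
has a neighbor strictly farther from `r`. -/
lemma exists_farther [Fintype V] (hn : 3 ≤ Fintype.card V) (hconn : G.Connected)
    (h2conn : ∀ v : V, (G.induce ({v}ᶜ : Set V)).Connected) {r z : V}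
    (hbud : 2 * G.dist r z + 2 < G.girth) :
    ∃ w : V, G.Adj z w ∧ G.dist r w = G.dist r z + 1 := by
  by_contra hno
  push_neg at hno
  obtain ⟨w₁, w₂, h1, h2, hne⟩ := two_neighbors hn hconn h2conn z
  have hub : ∀ w, G.Adj z w → G.dist r w ≤ G.dist r z := by
    intro w hw
    have ht := hconn.dist_triangle (u := r) (v := z) (w := w)
    have hzw : G.dist z w = 1 := dist_eq_one_iff_adj.mpr hw
    have := hno w hw
    omega
  rcases Nat.eq_zero_or_pos (G.dist r z) with h0 | hpos
  · have hrz : r = z := (hconn.preconnected r z).dist_eq_zero_iff.mp h0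
    subst hrz
    have hd1 : G.dist r w₁ = 1 := dist_eq_one_iff_adj.mpr h1
    have := hno w₁ h1
    omega
  · have key : ∀ w, G.Adj z w →
        ∃ P : G.Walk r z, P.IsPath ∧ P.length ≤ G.dist r z + 1 ∧
          ∃ l : List (Sym2 V), P.edges = l.concat s(w, z) := by
      intro w hw
      have hub' := hub w hw
      obtain ⟨p, hp, hpl⟩ := exists_geodesic hconn r w
      have hzp : z ∉ p.support := by
        intro hzs
        have hds := dist_add_dist_le_of_mem_support p hzs
        have hzw : G.dist z w = 1 := dist_eq_one_iff_adj.mpr hw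
        omega
      refine ⟨p.concat hw.symm, isPath_concat hp hw.symm hzp, ?_, p.edges, ?_⟩
      · rw [Walk.length_concat]; omega
      · rw [Walk.edges_concat]
    obtain ⟨P₁, hP₁, hl₁, l₁, he₁⟩ := key w₁ h1
    obtain ⟨P₂, hP₂, hl₂, l₂, he₂⟩ := key w₂ h2
    have hPeq := paths_eq P₁ P₂ hP₁ hP₂ (by omega)
    have heq : l₁.concat s(w₁, z) = l₂.concat s(w₂, z) := by rw [← he₁, ← he₂, hPeq]
    have hlast := (List.concat_inj.mp heq).2
    exact hne (Sym2.congr_left.mp hlast)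

/-- A predecessor along a geodesic towards `r`. -/
lemma exists_prev (hconn : G.Connected) {r v : V} (h : 1 ≤ G.dist r v) :
    ∃ y : V, G.Adj y v ∧ G.dist r y + 1 = G.dist r v := by
  obtain ⟨p, hplen⟩ := hconn.exists_walk_length_eq_dist v r
  cases p with
  | nil =>
      rw [SimpleGraph.dist_comm] at h
      simp only [Walk.length_nil] at hplen
      omega
  | @cons _ y _ hadj q =>
      refine ⟨y, hadj.symm, ?_⟩
      have h1 : G.dist r y ≤ q.length := by rw [SimpleGraph.dist_comm]; exact SimpleGraph.dist_le q
      have h2 : G.dist r v ≤ G.dist r y + G.dist y v := hconn.dist_triangle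
      have h3 : G.dist y v = 1 := dist_eq_one_iff_adj.mpr hadj.symm
      have h4 : G.dist r v = q.length + 1 := by
        rw [SimpleGraph.dist_comm]
        simpa using hplen.symm
      omega

/-- Construction of a small distance-`R` dominating set. -/
lemma covering [Fintype V] (hn : 3 ≤ Fintype.card V) (hconn : G.Connected)
    (h2conn : ∀ v : V, (G.induce ({v}ᶜ : Set V)).Connected) {R : ℕ}
    (hR : 4 * R + 3 ≤ G.girth) :
    ∃ M : Finset V, (∀ v : V, ∃ m ∈ M, G.dist v m ≤ R) ∧
      M.card * (R + 1) ≤ Fintype.card V := by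
  classical
  have hNE : Nonempty V := Fintype.card_pos_iff.mp (by omega)
  obtain ⟨r⟩ := hNE
  set f : V → ℕ := fun v => G.dist r v % (R + 1) with hf
  have hfmem : ∀ v : V, v ∈ Finset.univ → f v ∈ Finset.range (R + 1) := by
    intro v _
    simp only [Finset.mem_range, hf]
    exact Nat.mod_lt _ (Nat.succ_pos R)
  have hcard := Finset.card_eq_sum_card_fiberwise hfmem
  obtain ⟨j, hjmem, hjmin⟩ := Finset.exists_min_image (Finset.range (R + 1))
      (fun j => (Finset.univ.filter fun v => f v = j).card) ⟨0, by simp⟩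
  set M := Finset.univ.filter (fun v => f v = j) with hM
  have hjR : j ≤ R := by
    have := Finset.mem_range.mp hjmem
    omega
  have hcount : M.card * (R + 1) ≤ Fintype.card V := by
    calc M.card * (R+1) = ∑ _k ∈ Finset.range (R+1), M.card := by
          rw [Finset.sum_const, Finset.card_range, smul_eq_mul, mul_comm]
      _ ≤ ∑ k ∈ Finset.range (R+1), (Finset.univ.filter fun v => f v = k).card :=
          Finset.sum_le_sum (fun k hk => hjmin k hk)
      _ = Fintype.card V := by rw [← hcard, Finset.card_univ]
  have hmem : ∀ v : V, G.dist r v % (R+1) = j → v ∈ M := by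
    intro v hv
    simp only [hM, Finset.mem_filter, Finset.mem_univ, true_and, hf]
    exact hv
  have up : ∀ i : ℕ, ∀ v : V, G.dist r v = i → j ≤ i →
      ∃ m ∈ M, G.dist v m ≤ (i - j) % (R+1) := by
    intro i
    induction i using Nat.strong_induction_on with
    | _ i IH =>
      intro v hv hj
      rcases Nat.eq_zero_or_pos ((i - j) % (R+1)) with h0 | hpos
      · refine ⟨v, hmem v ?_, by simp [SimpleGraph.dist_self]⟩
        have h1 := Nat.div_add_mod (i - j) (R+1)
        have h2 : i = j + (R+1) * ((i - j)/(R+1)) := by omega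
        rw [hv, h2, Nat.add_mul_mod_self_left]
        exact Nat.mod_eq_of_lt (by omega)
      · have hne : i - j ≠ 0 := by
          intro h
          rw [h] at hpos
          simp at hpos
        have hi0 : 1 ≤ i := by omega
        obtain ⟨y, hyv, hylev⟩ := exists_prev hconn (by omega : 1 ≤ G.dist r v)
        have hyi : G.dist r y = i - 1 := by omega
        have hmodlt := Nat.mod_lt (i-j) (show 0 < R+1 by omega)
        have hstep : (i - 1 - j) % (R+1) = (i - j) % (R+1) - 1 := by
          have hd := Nat.div_add_mod (i - j) (R+1)
          have h1 : i - 1 - j = (R+1) * ((i-j)/(R+1)) + ((i-j)%(R+1) - 1) := by omega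
          rw [h1, Nat.mul_add_mod]
          exact Nat.mod_eq_of_lt (by omega)
        obtain ⟨m, hmM, hmd⟩ := IH (i-1) (by omega) y hyi (by omega)
        refine ⟨m, hmM, ?_⟩
        have ht : G.dist v m ≤ G.dist v y + G.dist y m := hconn.dist_triangle
        have hvy : G.dist v y = 1 := dist_eq_one_iff_adj.mpr hyv.symm
        omega
  have down : ∀ k : ℕ, ∀ v : V, G.dist r v + k = j → ∃ m ∈ M, G.dist v m ≤ k := by
    intro k
    induction k with
    | zero =>
        intro v hv
        refine ⟨v, hmem v ?_, by simp [SimpleGraph.dist_self]⟩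
        rw [Nat.add_zero] at hv
        rw [hv]
        exact Nat.mod_eq_of_lt (by omega)
    | succ k IH =>
        intro v hv
        have hbud : 2 * G.dist r v + 2 < G.girth := by omega
        obtain ⟨w, hw, hwd⟩ := exists_farther hn hconn h2conn hbud
        obtain ⟨m, hmM, hmd⟩ := IH w (by omega)
        refine ⟨m, hmM, ?_⟩
        have ht : G.dist v m ≤ G.dist v w + G.dist w m := hconn.dist_triangle
        have hvw : G.dist v w = 1 := dist_eq_one_iff_adj.mpr hw
        omega
  refine ⟨M, ?_, hcount⟩
  intro v
  rcases le_or_gt j (G.dist r v) with h | h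
  · obtain ⟨m, hmM, hmd⟩ := up (G.dist r v) v rfl h
    have := Nat.mod_lt (G.dist r v - j) (show 0 < R+1 by omega)
    exact ⟨m, hmM, by omega⟩
  · obtain ⟨m, hmM, hmd⟩ := down (j - G.dist r v) v (by omega)
    exact ⟨m, hmM, by omega⟩

/-- Build a "backbone" path extending away from `m` beyond `u`. -/
lemma backbone [Fintype V] (hn : 3 ≤ Fintype.card V) (hconn : G.Connected)
    (h2conn : ∀ v : V, (G.induce ({v}ᶜ : Set V)).Connected) {m u : V} {c R : ℕ}
    (hmu : G.dist m u = c + 1) (hR : 4 * R + 3 ≤ G.girth) :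
    ∀ t : ℕ, c + t ≤ R → ∃ (z : V) (w : G.Walk u z), w.length = t ∧
      G.dist m z = c + 1 + t ∧ ∀ y ∈ w.support, c + 1 ≤ G.dist m y := by
  intro t
  induction t with
  | zero =>
      intro _
      refine ⟨u, Walk.nil, rfl, by omega, ?_⟩
      intro y hy
      simp only [Walk.support_nil, List.mem_singleton] at hy
      subst hy
      omega
  | succ t IH =>
      intro hct
      obtain ⟨z, w, hwl, hdz, hsup⟩ := IH (by omega)
      have hb2 : 2 * G.dist m z + 2 < G.girth := by rw [hdz]; omega
      obtain ⟨z', hz', hdz'⟩ := exists_farther hn hconn h2conn hb2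
      refine ⟨z', w.concat hz', ?_, ?_, ?_⟩
      · rw [Walk.length_concat]; omega
      · rw [hdz', hdz]; omega
      · intro y hy
        rw [Walk.support_concat] at hy
        rcases List.mem_append.mp hy with h | h
        · exact hsup y h
        · have : y = z' := by simpa using h
          subst this
          omega

/-- The key monitoring lemma: a pair of aligned vertices on either side of an edge,
with total distance budget below half the girth, monitors the edge. -/
lemma monitors_of_aligned (hconn : G.Connected) {u v x m : V} {D c : ℕ} (huv : G.Adj u v)
    (hxu : G.dist x u = D) (hxv : G.dist x v = D + 1)
    (hmv : G.dist m v = c) (hmu : G.dist m u = c + 1)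
    (hbud : 2 * (D + c + 1) < G.girth) :
    Monitors G x m s(u, v) := by
  have huv1 : G.dist u v = 1 := dist_eq_one_iff_adj.mpr huv
  have hvu1 : G.dist v u = 1 := dist_eq_one_iff_adj.mpr huv.symm
  obtain ⟨γ1, hγ1p, hγ1l⟩ := exists_geodesic hconn x u
  obtain ⟨γ2, hγ2p, hγ2l⟩ := exists_geodesic hconn v m
  rw [hxu] at hγ1l
  have hγ2l' : γ2.length = c := by rw [hγ2l, SimpleGraph.dist_comm]; exact hmv
  have hvγ1 : v ∉ γ1.support := by
    intro hv
    have h := dist_add_dist_le_of_mem_support γ1 hv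
    omega
  have huγ2 : u ∉ γ2.support := by
    intro hu
    have h := dist_add_dist_le_of_mem_support γ2 hu
    have h2 : G.dist u m = c + 1 := by rw [SimpleGraph.dist_comm]; exact hmu
    omega
  have hdisj : ∀ y, y ∈ γ1.support → y ∈ γ2.support → False := by
    intro y hy1 hy2
    have hαp : (γ1.dropUntil y hy1).IsPath := hγ1p.dropUntil hy1
    have hβp : ((γ2.takeUntil y hy2).reverse).IsPath := (hγ2p.takeUntil hy2).reverse
    have hαl : (γ1.dropUntil y hy1).length ≤ D := by
      have h := congrArg Walk.length (γ1.take_spec hy1)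
      rw [Walk.length_append] at h
      omega
    have hβl : ((γ2.takeUntil y hy2).reverse).length ≤ c := by
      rw [Walk.length_reverse]
      have h := congrArg Walk.length (γ2.take_spec hy2)
      rw [Walk.length_append] at h
      omega
    have hvα : v ∉ (γ1.dropUntil y hy1).support :=
      fun hv => hvγ1 (Walk.support_dropUntil_subset _ hy1 hv)
    have hP : ((γ1.dropUntil y hy1).concat huv).IsPath := isPath_concat hαp huv hvα
    have heq := paths_eq ((γ1.dropUntil y hy1).concat huv) ((γ2.takeUntil y hy2).reverse)
      hP hβp (by rw [Walk.length_concat]; omega)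
    have he : s(u,v) ∈ ((γ2.takeUntil y hy2).reverse).edges := by
      rw [← heq, Walk.edges_concat, List.concat_eq_append]
      exact List.mem_append_right _ (by simp)
    have he2 : s(u,v) ∈ γ2.edges := by
      rw [Walk.edges_reverse, List.mem_reverse] at he
      exact Walk.edges_takeUntil_subset _ hy2 he
    exact huγ2 (Walk.fst_mem_support_of_mem_edges γ2 he2)
  set W := γ1.append (Walk.cons huv γ2) with hW
  have hWl : W.length = D + 1 + c := by
    rw [hW, Walk.length_append, Walk.length_cons]
    omega
  have hWp : W.IsPath := by
    rw [Walk.isPath_def, hW, Walk.support_append, Walk.support_cons, List.tail_cons]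
    apply List.Nodup.append
    · exact hγ1p.support_nodup
    · exact hγ2p.support_nodup
    · exact fun a ha1 ha2 => hdisj a ha1 ha2
  have heW : s(u,v) ∈ W.edges := by
    rw [hW, Walk.edges_append, Walk.edges_cons]
    simp
  constructor
  · exact hconn.preconnected x m
  · intro p hp
    have hdle : G.dist x m ≤ D + 1 + c := by rw [← hWl]; exact SimpleGraph.dist_le W
    have hQp := p.bypass_isPath
    have hQl : p.bypass.length ≤ D + 1 + c := le_trans p.length_bypass_le (by omega)
    have heq := paths_eq p.bypass W hQp hWp (by omega)
    exact p.edges_bypass_subset (heq ▸ heW)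

/-- For every edge there is a monitoring pair inside a distance-`R` dominating set. -/
lemma aux [Fintype V] (hn : 3 ≤ Fintype.card V) (hconn : G.Connected)
    (h2conn : ∀ v : V, (G.induce ({v}ᶜ : Set V)).Connected) {R : ℕ}
    (hR : 4 * R + 3 ≤ G.girth) {M : Finset V}
    (hcov : ∀ v : V, ∃ m ∈ M, G.dist v m ≤ R)
    {u v m : V} (huv : G.Adj u v) (hmM : m ∈ M)
    (hmin_v : ∀ m' ∈ M, G.dist m v ≤ G.dist m' v)
    (hmin_u : ∀ m' ∈ M, G.dist m v ≤ G.dist m' u) :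
    ∃ x ∈ M, Monitors G x m s(u,v) := by
  have hcR : G.dist m v ≤ R := by
    obtain ⟨m', hm'M, hm'd⟩ := hcov v
    have h1 := hmin_v m' hm'M
    have h2 : G.dist m' v = G.dist v m' := SimpleGraph.dist_comm
    omega
  have hmu : G.dist m u = G.dist m v + 1 := by
    rcases dist_succ_of_adj hconn (x := m) huv.symm (by omega) with h | h
    · exact h
    · have := hmin_u m hmM
      omega
  -- backbone beyond u, away from m
  obtain ⟨z, w, hwl, hdz, hsup⟩ := backbone hn hconn h2conn hmu hR (R - G.dist m v) (by omega)
  have hvw : v ∉ w.support := by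
    intro hv
    have := hsup v hv
    omega
  have hdvz : G.dist v z = R - G.dist m v + 1 := by
    have h1 : G.dist m z ≤ G.dist m v + G.dist v z := hconn.dist_triangle
    have h2 : G.dist v z ≤ (Walk.cons huv.symm w).length := SimpleGraph.dist_le _
    rw [Walk.length_cons] at h2
    omega
  have hduz : G.dist z u ≤ R - G.dist m v := by
    rw [SimpleGraph.dist_comm]
    have := SimpleGraph.dist_le w
    omega
  obtain ⟨x, hxM, hxz⟩ := hcov z
  have hxz' : G.dist x z ≤ R := by rw [SimpleGraph.dist_comm]; exact hxz
  have hDle : G.dist x u ≤ 2 * R - G.dist m v := by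
    have h1 : G.dist x u ≤ G.dist x z + G.dist z u := hconn.dist_triangle
    omega
  rcases dist_succ_of_adj hconn huv (x := x) (by omega) with hxv | hxv
  · exact ⟨x, hxM, monitors_of_aligned hconn huv rfl hxv rfl hmu (by omega)⟩
  · exfalso
    -- misaligned case
    obtain ⟨γx, hγxp, hγxl⟩ := exists_geodesic hconn x z
    by_cases hvγ : v ∈ γx.support
    · have h1 := dist_add_dist_le_of_mem_support γx hvγ
      have h2 := hmin_v x hxM
      omega
    · obtain ⟨γv, hγvp, hγvl⟩ := exists_geodesic hconn x v
      have huγv : u ∉ γv.support := by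
        intro hu
        have h1 := dist_add_dist_le_of_mem_support γv hu
        have h2 : G.dist u v = 1 := dist_eq_one_iff_adj.mpr huv
        omega
      have hP1 : (γv.concat huv.symm).IsPath := isPath_concat hγvp huv.symm huγv
      have hvP2 : v ∉ (γx.append w.reverse).support := by
        rw [Walk.support_append]
        intro h
        rcases List.mem_append.mp h with h | h
        · exact hvγ h
        · have : v ∈ w.reverse.support := List.mem_of_mem_tail h
          rw [Walk.support_reverse, List.mem_reverse] at this
          exact hvw this
      have hQp := (γx.append w.reverse).bypass_isPath
      have hQl : (γx.append w.reverse).bypass.length ≤ 2 * R - G.dist m v := by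
        have h1 := (γx.append w.reverse).length_bypass_le
        rw [Walk.length_append, Walk.length_reverse] at h1
        omega
      have hvQ : v ∉ (γx.append w.reverse).bypass.support := by
        intro h
        exact hvP2 ((γx.append w.reverse).support_bypass_subset h)
      have heq := paths_eq (γv.concat huv.symm) ((γx.append w.reverse).bypass) hP1 hQp (by
        rw [Walk.length_concat]
        omega)
      have hvmem : v ∈ (γv.concat huv.symm).support := by
        rw [Walk.support_concat]
        exact List.mem_append_left _ (Walk.end_mem_support γv)
      rw [heq] at hvmem
      exact hvQ hvmem

end MegAux

/-- a 2-connected graph on `n` vertices with finite girth `g ≥ 4`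
satisfies `meg G ≤ 4n / (g - 3)` (stated multiplicatively, which is equivalent since
`g - 3 > 0`). -/
theorem meg_le_of_two_connected_girth {V : Type*} [Fintype V] (G : SimpleGraph V)
    (hn : 3 ≤ Fintype.card V) (hconn : G.Connected)
    (h2conn : ∀ v : V, (G.induce ({v}ᶜ : Set V)).Connected)
    (hgfin : G.egirth ≠ ⊤) (hg4 : 4 ≤ G.egirth) :
    meg G * (G.girth - 3) ≤ 4 * Fintype.card V := by
  classical
  have hg4' : 4 ≤ G.girth := by
    have h := ENat.toNat_le_toNat hg4 hgfin
    simpa [SimpleGraph.girth] using h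
  have hR1 : 4 * ((G.girth - 3) / 4) ≤ G.girth - 3 := by
    have := Nat.div_mul_le_self (G.girth - 3) 4
    omega
  have hR3 : 4 * ((G.girth - 3) / 4) + 3 ≤ G.girth := by omega
  have hR2 : G.girth - 3 ≤ 4 * ((G.girth - 3) / 4 + 1) := by
    have h1 := Nat.div_add_mod (G.girth - 3) 4
    have h2 : (G.girth - 3) % 4 < 4 := Nat.mod_lt _ (by norm_num)
    omega
  obtain ⟨M, hcov, hcount⟩ := MegAux.covering hn hconn h2conn hR3
  have hMne : M.Nonempty := by
    have hne : Nonempty V := Fintype.card_pos_iff.mp (by omega)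
    obtain ⟨v0⟩ := hne
    obtain ⟨m, hm, _⟩ := hcov v0
    exact ⟨m, hm⟩
  have hMEG : IsMEGSet G ↑M := by
    intro e he
    induction e using Sym2.ind with
    | _ u v =>
      have huv : G.Adj u v := by rwa [SimpleGraph.mem_edgeSet] at he
      obtain ⟨m, hmM, hmmin⟩ := Finset.exists_min_image M
        (fun m => min (G.dist m u) (G.dist m v)) hMne
      rcases le_total (G.dist m v) (G.dist m u) with hle | hle
      · have hmin_v : ∀ m' ∈ M, G.dist m v ≤ G.dist m' v := by
          intro m' hm'
          have := hmmin m' hm'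
          simp only [min_le_iff, le_min_iff] at this
          omega
        have hmin_u : ∀ m' ∈ M, G.dist m v ≤ G.dist m' u := by
          intro m' hm'
          have := hmmin m' hm'
          simp only [min_le_iff, le_min_iff] at this
          omega
        obtain ⟨x, hxM, hmon⟩ := MegAux.aux hn hconn h2conn hR3 hcov huv hmM hmin_v hmin_u
        exact ⟨x, hxM, m, hmM, hmon⟩
      · have hmin_v : ∀ m' ∈ M, G.dist m u ≤ G.dist m' u := by
          intro m' hm'
          have := hmmin m' hm'
          simp only [min_le_iff, le_min_iff] at this
          omega
        have hmin_u : ∀ m' ∈ M, G.dist m u ≤ G.dist m' v := by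
          intro m' hm'
          have := hmmin m' hm'
          simp only [min_le_iff, le_min_iff] at this
          omega
        obtain ⟨x, hxM, hmon⟩ := MegAux.aux hn hconn h2conn hR3 hcov huv.symm hmM hmin_v hmin_u
        rw [Sym2.eq_swap] at hmon
        exact ⟨x, hxM, m, hmM, hmon⟩
  have hmeg : meg G ≤ M.card := Nat.sInf_le ⟨M, hMEG, rfl⟩
  calc meg G * (G.girth - 3) ≤ M.card * (4 * ((G.girth - 3) / 4 + 1)) :=
        Nat.mul_le_mul hmeg hR2
    _ = 4 * (M.card * ((G.girth - 3) / 4 + 1)) := by ring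
    _ ≤ 4 * Fintype.card V := by omega
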